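/- Let ν : [0,1] → ℝ be continuous and positive, C = max_{0≤x≤1}(1/ν(x))∫ₓ¹ ν, and g : [0,1] → ℝ increasing and right-continuous with g(0)=0. Then ∫₀¹ g(x) ν(x) dx ≤ C ∫₀¹ ν(z) dg(z), where the right side is the integral of ν against the Stieltjes measure dg. -/

import Mathlib

open MeasureTheory Set intervalIntegral

/-- BV/monotone form of the sharp weighted L¹ Poincaré inequality:
`∫₀¹ g ν dx ≤ C ∫₀¹ ν dg` for increasing right-continuous `g` with `g 0 = 0`,
where `C = max_{0≤x≤1} (1/ν(x))∫ₓ¹ ν`. -/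
theorem stmt_18 (ν : ℝ → ℝ)
    (hν : ContinuousOn ν (Icc 0 1)) (hνpos : ∀ x ∈ Icc (0:ℝ) 1, 0 < ν x)
    (C : ℝ)
    (hC : IsGreatest ((fun x => (1 / ν x) * ∫ z in x..1, ν z) '' Icc 0 1) C)
    (g : StieltjesFunction ℝ) (hg0 : g 0 = 0) :
    ∫ x in (0:ℝ)..1, g x * ν x ≤ C * ∫ z in Icc (0:ℝ) 1, ν z ∂g.measure := by
  classical
  -- projection onto [0,1]
  set π : ℝ → ℝ := fun x => max 0 (min 1 x) with hπ
  have hπcont : Continuous π := continuous_const.max (continuous_const.min continuous_id)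
  have hπmem : ∀ x, π x ∈ Icc (0:ℝ) 1 :=
    fun x => ⟨le_max_left _ _, max_le zero_le_one (min_le_left _ _)⟩
  have hπeq : ∀ x ∈ Icc (0:ℝ) 1, π x = x := by
    intro x hx
    simp only [hπ]
    rw [min_eq_right hx.2, max_eq_right hx.1]
  -- global continuous positive extension of ν
  set w : ℝ → ℝ := fun x => ν (π x) with hw
  have hwcont : Continuous w := hν.comp_continuous hπcont hπmem
  have hwpos : ∀ x, 0 < w x := fun x => hνpos _ (hπmem x)
  have hweq : ∀ x ∈ Icc (0:ℝ) 1, w x = ν x := by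
    intro x hx; simp only [hw, hπeq x hx]
  -- nonnegativity of C
  have hC0 : 0 ≤ C := by
    have h1 : (1 / ν 1) * ∫ z in (1:ℝ)..1, ν z = 0 := by
      simp [intervalIntegral.integral_same]
    have := hC.2 ⟨1, ⟨zero_le_one, le_refl 1⟩, h1⟩
    linarith
  -- the key pointwise bound for w
  have hCle : ∀ z ∈ Icc (0:ℝ) 1, (∫ t in z..1, w t) ≤ C * w z := by
    intro z hz
    have hmem : (1 / ν z) * ∫ t in z..1, ν t ≤ C := hC.2 ⟨z, hz, rfl⟩
    have hiw : (∫ t in z..1, w t) = ∫ t in z..1, ν t := by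
      apply intervalIntegral.integral_congr
      intro t ht
      rw [uIcc_of_le hz.2] at ht
      exact hweq t ⟨le_trans hz.1 ht.1, ht.2⟩
    have hνz : 0 < ν z := hνpos z hz
    rw [hiw, hweq z hz]
    rw [one_div, inv_mul_le_iff₀ hνz] at hmem
    linarith [hmem]
  set μ := g.measure with hμ
  have hμIcc : μ (Icc (0:ℝ) 1) < ⊤ := isCompact_Icc.measure_lt_top
  -- bound for w
  obtain ⟨xM, -, hM⟩ := isCompact_Icc.exists_isMaxOn (nonempty_Icc.2 (zero_le_one' ℝ))
    hwcont.continuousOn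
  set M := w xM with hMdef
  have hMb : ∀ x, w x ≤ M := by
    intro x
    have : w (π x) = w x := by
      simp only [hw]
      congr 1
      exact hπeq _ (hπmem x)
    rw [← this]
    exact hM (hπmem x)
  -- names for lintegrals
  set L := ∫⁻ x in Ioc (0:ℝ) 1, ENNReal.ofReal (g x * w x) ∂volume with hL
  set R := ∫⁻ z in Icc (0:ℝ) 1, ENNReal.ofReal (w z) ∂μ with hR
  have hgmeas : Measurable (g : ℝ → ℝ) := g.mono.measurable
  -- Step 1: LHS = L.toReal
  have hstep1 : (∫ x in (0:ℝ)..1, g x * ν x) = L.toReal := by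
    rw [intervalIntegral.integral_of_le zero_le_one]
    have hcong : (∫ x in Ioc (0:ℝ) 1, g x * ν x) = ∫ x in Ioc (0:ℝ) 1, g x * w x := by
      apply setIntegral_congr_fun measurableSet_Ioc
      intro x hx
      simp only
      rw [hweq x ⟨hx.1.le, hx.2⟩]
    rw [hcong]
    rw [MeasureTheory.integral_eq_lintegral_of_nonneg_ae]
    · refine (ae_restrict_iff' measurableSet_Ioc).2 (ae_of_all _ fun x hx => ?_)
      have hgx : (0:ℝ) ≤ g x := hg0 ▸ g.mono hx.1.le
      exact mul_nonneg hgx (hwpos x).le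
    · exact (hgmeas.mul hwcont.measurable).aestronglyMeasurable
  -- Step 2: L ≤ ofReal C * R
  have hstep2 : L ≤ ENNReal.ofReal C * R := by
    -- rewrite L as an iterated integral
    have h1 : L = ∫⁻ x in Ioc (0:ℝ) 1,
        ∫⁻ z, (Ioc (0:ℝ) x).indicator (fun _ => ENNReal.ofReal (w x)) z ∂μ ∂volume := by
      rw [hL]
      apply setLIntegral_congr_fun measurableSet_Ioc
      intro x hx
      beta_reduce
      rw [lintegral_indicator measurableSet_Ioc, setLIntegral_const,
        hμ, g.measure_Ioc, hg0, sub_zero]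
      rw [← ENNReal.ofReal_mul (hνpos _ (hπmem x)).le]
      ring_nf
      rfl
    -- swap
    have hFmeas : Measurable (fun p : ℝ × ℝ =>
        (Ioc (0:ℝ) p.1).indicator (fun _ => ENNReal.ofReal (w p.1)) p.2) := by
      have : (fun p : ℝ × ℝ => (Ioc (0:ℝ) p.1).indicator
          (fun _ => ENNReal.ofReal (w p.1)) p.2)
          = Set.indicator {p : ℝ × ℝ | 0 < p.2 ∧ p.2 ≤ p.1}
            (fun p => ENNReal.ofReal (w p.1)) := by
        ext p
        by_cases h : p.2 ∈ Ioc (0:ℝ) p.1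
        · rw [Set.indicator_of_mem h, Set.indicator_of_mem]
          exact ⟨h.1, h.2⟩
        · rw [Set.indicator_of_notMem h, Set.indicator_of_notMem]
          exact fun hc => h ⟨hc.1, hc.2⟩
      rw [this]
      apply Measurable.indicator
      · exact (ENNReal.measurable_ofReal.comp (hwcont.measurable.comp measurable_fst))
      · exact MeasurableSet.inter (measurableSet_lt measurable_const measurable_snd)
          (measurableSet_le measurable_snd measurable_fst)
    have hswap : (∫⁻ x in Ioc (0:ℝ) 1,
        ∫⁻ z, (Ioc (0:ℝ) x).indicator (fun _ => ENNReal.ofReal (w x)) z ∂μ ∂volume)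
        = ∫⁻ z, (∫⁻ x in Ioc (0:ℝ) 1,
            (Ioc (0:ℝ) x).indicator (fun _ => ENNReal.ofReal (w x)) z ∂volume) ∂μ :=
      lintegral_lintegral_swap hFmeas.aemeasurable
    rw [h1, hswap]
    -- bound the inner integrals
    have hinner : ∀ z : ℝ, (∫⁻ x in Ioc (0:ℝ) 1,
        (Ioc (0:ℝ) x).indicator (fun _ => ENNReal.ofReal (w x)) z ∂volume)
        ≤ (Ioc (0:ℝ) 1).indicator (fun z => ENNReal.ofReal C * ENNReal.ofReal (w z)) z := by
      intro z
      by_cases hz : z ∈ Ioc (0:ℝ) 1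
      · rw [Set.indicator_of_mem hz]
        have hset : Ici z ∩ Ioc (0:ℝ) 1 = Icc z 1 := by
          ext t
          simp only [mem_inter_iff, mem_Ioc, mem_Ici, mem_Icc]
          constructor
          · rintro ⟨htz, -, ht1⟩; exact ⟨htz, ht1⟩
          · rintro ⟨htz, ht1⟩; exact ⟨htz, lt_of_lt_of_le hz.1 htz, ht1⟩
        have heq : (∫⁻ x in Ioc (0:ℝ) 1,
            (Ioc (0:ℝ) x).indicator (fun _ => ENNReal.ofReal (w x)) z ∂volume)
            = ∫⁻ x in Icc z 1, ENNReal.ofReal (w x) ∂volume := by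
          have e1 : (∫⁻ x in Ioc (0:ℝ) 1,
              (Ioc (0:ℝ) x).indicator (fun _ => ENNReal.ofReal (w x)) z ∂volume)
              = ∫⁻ x in Ioc (0:ℝ) 1,
                (Ici z).indicator (fun x => ENNReal.ofReal (w x)) x ∂volume := by
            apply setLIntegral_congr_fun measurableSet_Ioc
            intro x hx
            beta_reduce
            by_cases hzx : z ≤ x
            · rw [Set.indicator_of_mem (Set.mem_Ioc.2 ⟨hz.1, hzx⟩)
                (fun _ => ENNReal.ofReal (w x))]
              exact (Set.indicator_of_mem (mem_Ici.2 hzx) (fun t => ENNReal.ofReal (w t))).symm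
            · rw [Set.indicator_of_notMem
                (fun hc => hzx (Set.mem_Ioc.1 hc).2) (fun _ => ENNReal.ofReal (w x))]
              exact (Set.indicator_of_notMem (fun hc => hzx (mem_Ici.1 hc)) (fun t => ENNReal.ofReal (w t))).symm
          rw [e1, lintegral_indicator measurableSet_Ici,
            Measure.restrict_restrict measurableSet_Ici, hset]
        rw [heq]
        have hIccIoc : (∫⁻ x in Icc z 1, ENNReal.ofReal (w x) ∂volume)
            = ∫⁻ x in Ioc z 1, ENNReal.ofReal (w x) ∂volume :=
          (setLIntegral_congr Ioc_ae_eq_Icc).symm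
        have hval : (∫⁻ x in Ioc z 1, ENNReal.ofReal (w x) ∂volume)
            = ENNReal.ofReal (∫ x in z..1, w x) := by
          rw [intervalIntegral.integral_of_le hz.2]
          rw [MeasureTheory.ofReal_integral_eq_lintegral_ofReal]
          · exact hwcont.integrableOn_Ioc
          · exact ae_of_all _ fun x => (hwpos x).le
        rw [hIccIoc, hval, ← ENNReal.ofReal_mul hC0]
        exact ENNReal.ofReal_le_ofReal (hCle z ⟨hz.1.le, hz.2⟩)
      · rw [Set.indicator_of_notMem hz]
        have : (∫⁻ x in Ioc (0:ℝ) 1,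
            (Ioc (0:ℝ) x).indicator (fun _ => ENNReal.ofReal (w x)) z ∂volume) = 0 := by
          have h0 : ∀ᵐ x ∂volume, x ∈ Ioc (0:ℝ) 1 →
              (Ioc (0:ℝ) x).indicator (fun _ => ENNReal.ofReal (w x)) z = (0:ENNReal) := by
            apply ae_of_all
            intro x hx
            apply Set.indicator_of_notMem
            intro hc
            rw [mem_Ioc] at hz
            push_neg at hz
            rcases lt_or_ge (0:ℝ) z with h0 | h0
            · exact absurd (le_trans hc.2 hx.2) (not_le.2 (hz h0))
            · exact absurd hc.1 (not_lt.2 h0)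
          rw [setLIntegral_congr_fun_ae measurableSet_Ioc h0, lintegral_zero]
        exact this.le
      -- done
    calc (∫⁻ z, (∫⁻ x in Ioc (0:ℝ) 1,
          (Ioc (0:ℝ) x).indicator (fun _ => ENNReal.ofReal (w x)) z ∂volume) ∂μ)
        ≤ ∫⁻ z, (Ioc (0:ℝ) 1).indicator
            (fun z => ENNReal.ofReal C * ENNReal.ofReal (w z)) z ∂μ :=
          lintegral_mono hinner
      _ = ∫⁻ z in Ioc (0:ℝ) 1, ENNReal.ofReal C * ENNReal.ofReal (w z) ∂μ :=
          lintegral_indicator measurableSet_Ioc _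
      _ = ENNReal.ofReal C * ∫⁻ z in Ioc (0:ℝ) 1, ENNReal.ofReal (w z) ∂μ := by
          rw [lintegral_const_mul]
          exact ENNReal.measurable_ofReal.comp hwcont.measurable
      _ ≤ ENNReal.ofReal C * R := by
          rw [hR]
          exact mul_le_mul_right (lintegral_mono_set Ioc_subset_Icc_self) _
  -- finiteness of R
  have hRfin : R < ⊤ := by
    calc R ≤ ∫⁻ _ in Icc (0:ℝ) 1, ENNReal.ofReal M ∂μ :=
          lintegral_mono fun z => ENNReal.ofReal_le_ofReal (hMb z)
      _ = ENNReal.ofReal M * μ (Icc 0 1) := setLIntegral_const _ _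
      _ < ⊤ := ENNReal.mul_lt_top ENNReal.ofReal_lt_top hμIcc
  -- Step 3: RHS = (ofReal C * R).toReal
  have hstep3 : C * (∫ z in Icc (0:ℝ) 1, ν z ∂μ) = (ENNReal.ofReal C * R).toReal := by
    have hcong : (∫ z in Icc (0:ℝ) 1, ν z ∂μ) = ∫ z in Icc (0:ℝ) 1, w z ∂μ :=
      (setIntegral_congr_fun measurableSet_Icc fun z hz => (hweq z hz).symm)
    rw [hcong]
    rw [MeasureTheory.integral_eq_lintegral_of_nonneg_ae
      (ae_of_all _ fun z => (hwpos z).le) hwcont.aestronglyMeasurable]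
    rw [ENNReal.toReal_mul, ENNReal.toReal_ofReal hC0, hR]
  rw [hstep1, hstep3]
  exact ENNReal.toReal_mono (ENNReal.mul_ne_top ENNReal.ofReal_ne_top hRfin.ne) hstep2
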